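/- Upper bound side: for 0 ≤ q < p < 1, -ln(1 - (√p - √q)²) ≤ ((p - q)²/p) · (-ln(1-p)/p). Equivalently Δ² ≤ ∇² · (-ln(1-p))/p², where ∇ = p - q. -/

import Mathlib

lemma chord_log (x p : ℝ) (hx : 0 ≤ x) (hxp : x ≤ p) (hp0 : 0 < p) (hp : p < 1) :
    -Real.log (1 - x) ≤ x * (-Real.log (1 - p)) / p := by
  have h1p : (0:ℝ) < 1 - p := by linarith
  have hc := (strictConcaveOn_log_Ioi.concaveOn).2
    (Set.mem_Ioi.mpr (by norm_num : (0:ℝ) < 1))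
    (Set.mem_Ioi.mpr h1p)
    (show (0:ℝ) ≤ (p - x)/p from div_nonneg (by linarith) hp0.le)
    (show (0:ℝ) ≤ x/p by positivity)
    (show (p - x)/p + x/p = 1 by field_simp; ring)
  have hcomb : (p - x)/p * 1 + x/p * (1 - p) = 1 - x := by
    field_simp; ring
  rw [smul_eq_mul, smul_eq_mul, smul_eq_mul, smul_eq_mul, hcomb, Real.log_one] at hc
  simp only [div_mul_eq_mul_div, mul_zero, zero_mul, zero_div, zero_add] at hc
  rw [mul_neg, neg_div, neg_le_neg_iff]
  linarith

theorem delta_upper_bound (p q : ℝ) (hq : 0 ≤ q) (hqp : q < p) (hp : p < 1) :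
    -Real.log (1 - (Real.sqrt p - Real.sqrt q) ^ 2)
      ≤ (p - q) ^ 2 * (-Real.log (1 - p)) / p ^ 2 := by
  have hp0 : 0 < p := lt_of_le_of_lt hq hqp
  set a := Real.sqrt p
  set b := Real.sqrt q
  have ha : 0 ≤ a := Real.sqrt_nonneg p
  have hb : 0 ≤ b := Real.sqrt_nonneg q
  have ha2 : a ^ 2 = p := Real.sq_sqrt hp0.le
  have hb2 : b ^ 2 = q := Real.sq_sqrt hq
  -- step 1: (a - b)^2 ≤ (p - q)^2 / p
  have key : (a - b) ^ 2 ≤ (p - q) ^ 2 / p := by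
    rw [le_div_iff₀ hp0]
    nlinarith [mul_nonneg (mul_nonneg hb (sq_nonneg (b - a))) (by linarith : (0:ℝ) ≤ b + 2*a),
      sq_nonneg (a - b), sq_nonneg (a + b)]
  have hx0 : 0 ≤ (a - b) ^ 2 := sq_nonneg _
  have hx'p : (p - q) ^ 2 / p ≤ p := by
    rw [div_le_iff₀ hp0]
    nlinarith [sq_nonneg (p - q)]
  -- monotonicity of -log
  have hpos : 0 < 1 - (p - q)^2 / p := by
    have : (p - q)^2 / p < 1 := lt_of_le_of_lt hx'p hp
    linarith
  have hmono : -Real.log (1 - (a - b) ^ 2) ≤ -Real.log (1 - (p - q)^2 / p) := by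
    apply neg_le_neg
    apply Real.log_le_log hpos
    linarith
  have hchord := chord_log ((p - q)^2 / p) p (by positivity) hx'p hp0 hp
  have heq : (p - q)^2 / p * (-Real.log (1 - p)) / p
      = (p - q) ^ 2 * (-Real.log (1 - p)) / p ^ 2 := by
    rw [div_mul_eq_mul_div, div_div, ← sq]
  linarith [heq ▸ hchord]
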